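/- Let (Ω, F, P) be a probability space, u > 0, (r_k)_{k≥1} nonnegative real constants, and (R_k)_{k≥0}, (Y_k)_{k≥1}, (α_k)_{k≥1} real-valued random variables such that almost surely R_0 = u, α_k ≥ r_k and R_k ≥ (1 + α_k) R_{k−1} − Y_k for all k ≥ 1. Set v_k = ∏_{j=1}^{k} 1/(1 + r_j) (v_0 = 1), Y_k^* = Y_k/(1 + α_k), S_k^* = Σ_{j=1}^{k} v_{j−1} Y_j^*, and assume Y_1^*, Y_2^*, … are mutually independent. Then for every h ≥ 0: P[∃ k ≥ 0, R_k < 0] ≤ e^{−hu} · sup_{k≥1} E[e^{h S_k^*}] = e^{−hu} · sup_{k≥1} ∏_{j=1}^{k} E[e^{h v_{j−1} Y_j^*}]. -/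

import Mathlib

open MeasureTheory ProbabilityTheory
open scoped ENNReal

lemma stmt10_aux_det (u : ℝ) (hu : 0 < u) (r a R Y : ℕ → ℝ)
    (hr : ∀ k : ℕ, 1 ≤ k → 0 ≤ r k)
    (v : ℕ → ℝ) (hv : ∀ k, v k = ∏ j ∈ Finset.Icc 1 k, (1 + r j)⁻¹)
    (hR0 : R 0 = u) (ha : ∀ k, 1 ≤ k → r k ≤ a k)
    (hstep : ∀ k, 1 ≤ k → (1 + a k) * R (k - 1) - Y k ≤ R k)
    (hruin : ∃ k, R k < 0) :
    ∃ m : ℕ, u < ∑ j ∈ Finset.range (m + 1), v j * (Y (j + 1) / (1 + a (j + 1))) := by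
  set T : ℕ → ℝ := fun m => ∑ j ∈ Finset.range m, v j * (Y (j + 1) / (1 + a (j + 1))) with hT
  have hvpos : ∀ k, 0 < v k := by
    intro k
    rw [hv]
    apply Finset.prod_pos
    intro j hj
    have : 0 ≤ r j := hr j (Finset.mem_Icc.mp hj).1
    positivity
  have hv0 : v 0 = 1 := by simp [hv]
  have hvs : ∀ k, v (k + 1) = v k * (1 + r (k + 1))⁻¹ := by
    intro k
    rw [hv, hv, Finset.prod_Icc_succ_top (Nat.le_add_left 1 k)]
  have hapos : ∀ k, 1 ≤ k → 0 < 1 + a k := by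
    intro k hk
    have := hr k hk; have := ha k hk; linarith
  have key : ∀ j : ℕ, u - T j ≤ v j * R j →
      u - T (j + 1) ≤ v j * (R (j + 1) / (1 + a (j + 1))) := by
    intro j hj
    have h1 : 0 < 1 + a (j + 1) := hapos (j + 1) (Nat.le_add_left 1 j)
    have h2 : (1 + a (j + 1)) * R j - Y (j + 1) ≤ R (j + 1) := by
      have := hstep (j + 1) (Nat.le_add_left 1 j); simpa using this
    have h3 : R j - Y (j + 1) / (1 + a (j + 1)) ≤ R (j + 1) / (1 + a (j + 1)) := by
      rw [le_div_iff₀ h1]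
      calc (R j - Y (j + 1) / (1 + a (j + 1))) * (1 + a (j + 1))
          = (1 + a (j + 1)) * R j - Y (j + 1) := by field_simp
        _ ≤ R (j + 1) := h2
    have hTsucc : T (j + 1) = T j + v j * (Y (j + 1) / (1 + a (j + 1))) := by
      simp [hT, Finset.sum_range_succ]
    have := mul_le_mul_of_nonneg_left h3 (hvpos j).le
    rw [hTsucc]
    nlinarith [this]
  have inv : ∀ j : ℕ, (∀ i, i ≤ j → 0 ≤ R i) → u - T j ≤ v j * R j := by
    intro j
    induction j with
    | zero => intro _; simp [hT, hv0, hR0]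
    | succ j ih =>
      intro hnn
      have h1 := key j (ih fun i hi => hnn i (hi.trans (Nat.le_succ j)))
      have h2 : 0 < 1 + a (j + 1) := hapos (j + 1) (Nat.le_add_left 1 j)
      have h3 : v j * (R (j + 1) / (1 + a (j + 1))) ≤ v (j + 1) * R (j + 1) := by
        rw [hvs j]
        have hinv : (1 + a (j + 1))⁻¹ ≤ (1 + r (j + 1))⁻¹ := by
          apply inv_anti₀
          · linarith [hr (j + 1) (Nat.le_add_left 1 j)]
          · linarith [ha (j + 1) (Nat.le_add_left 1 j)]
        have hR1 : 0 ≤ R (j + 1) := hnn (j + 1) le_rfl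
        calc v j * (R (j + 1) / (1 + a (j + 1)))
            = v j * ((1 + a (j + 1))⁻¹ * R (j + 1)) := by ring
          _ ≤ v j * ((1 + r (j + 1))⁻¹ * R (j + 1)) :=
              mul_le_mul_of_nonneg_left (mul_le_mul_of_nonneg_right hinv hR1) (hvpos j).le
          _ = v j * (1 + r (j + 1))⁻¹ * R (j + 1) := by ring
      linarith
  classical
  have hk0 := Nat.find_spec hruin
  set k0 := Nat.find hruin with hk0def
  have hk0pos : 1 ≤ k0 := by
    rcases Nat.eq_zero_or_pos k0 with h | h
    · exfalso; rw [h] at hk0; rw [hR0] at hk0; linarith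
    · exact h
  obtain ⟨j, hj⟩ : ∃ j, k0 = j + 1 := ⟨k0 - 1, (Nat.succ_pred_eq_of_pos hk0pos).symm⟩
  have hnn : ∀ i, i ≤ j → 0 ≤ R i := by
    intro i hi
    by_contra hcon
    have hik : i < k0 := by omega
    exact hcon (le_of_not_gt (Nat.find_min hruin hik))
  have h1 := key j (inv j hnn)
  have h2 : v j * (R (j + 1) / (1 + a (j + 1))) < 0 := by
    apply mul_neg_of_pos_of_neg (hvpos j)
    apply div_neg_of_neg_of_pos _ (hapos (j + 1) (Nat.le_add_left 1 j))
    rw [← hj]; exact hk0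
  exact ⟨j, by simp only [hT] at h1 ⊢; linarith⟩

theorem stmt10 {Ω : Type*} [MeasurableSpace Ω] (P : Measure Ω) [IsProbabilityMeasure P]
    (u : ℝ) (hu : 0 < u)
    (r : ℕ → ℝ) (hr : ∀ k : ℕ, 1 ≤ k → 0 ≤ r k)
    (R Y α : ℕ → Ω → ℝ)
    (hae : ∀ᵐ ω ∂P, R 0 ω = u ∧
      ∀ k : ℕ, 1 ≤ k → r k ≤ α k ω ∧ (1 + α k ω) * R (k - 1) ω - Y k ω ≤ R k ω)
    (v : ℕ → ℝ) (hv : ∀ k, v k = ∏ j ∈ Finset.Icc 1 k, (1 + r j)⁻¹)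
    (Ystar : ℕ → Ω → ℝ) (hYstar : ∀ k ω, Ystar k ω = Y k ω / (1 + α k ω))
    (Sstar : ℕ → Ω → ℝ)
    (hSstar : ∀ k ω, Sstar k ω = ∑ j ∈ Finset.Icc 1 k, v (j - 1) * Ystar j ω)
    (hmeas : ∀ k, Measurable (Ystar k))
    (hindep : iIndepFun (fun k : ℕ => Ystar (k + 1)) P)
    (h : ℝ) (hh : 0 ≤ h) :
    P {ω | ∃ k : ℕ, R k ω < 0} ≤
      ENNReal.ofReal (Real.exp (-h * u)) *
        ⨆ k : ℕ, ∫⁻ ω, ENNReal.ofReal (Real.exp (h * Sstar (k + 1) ω)) ∂P ∧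
    (⨆ k : ℕ, ∫⁻ ω, ENNReal.ofReal (Real.exp (h * Sstar (k + 1) ω)) ∂P) =
      ⨆ k : ℕ, ∏ j ∈ Finset.Icc 1 (k + 1),
        ∫⁻ ω, ENNReal.ofReal (Real.exp (h * (v (j - 1) * Ystar j ω))) ∂P := by
  classical
  -- the discounted increments
  set X : ℕ → Ω → ℝ := fun j ω => v j * Ystar (j + 1) ω with hXdef
  have hXm : ∀ j, Measurable (X j) := fun j => (hmeas (j + 1)).const_mul (v j)
  have hXi : iIndepFun X P :=
    hindep.comp (fun j (x : ℝ) => v j * x) (fun j => measurable_const_mul (v j))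
  set T : ℕ → Ω → ℝ := fun n ω => ∑ j ∈ Finset.range n, X j ω with hTdef
  have hTm : ∀ n, Measurable (T n) := fun n => Finset.measurable_sum _ (fun j _ => hXm j)
  have hTS : ∀ n ω, Sstar n ω = T n ω := by
    intro n ω
    rw [hSstar, ← Finset.Ico_add_one_right_eq_Icc, Finset.sum_Ico_eq_sum_range]
    apply Finset.sum_congr rfl
    intro i _
    have h1 : 1 + i = i + 1 := by omega
    rw [h1]
    simp [hXdef]
  set E : ℕ → Ω → ℝ≥0∞ := fun n ω => ENNReal.ofReal (Real.exp (h * T n ω)) with hEdef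
  have hEm : ∀ n, Measurable (E n) :=
    fun n => (Real.measurable_exp.comp ((hTm n).const_mul h)).ennreal_ofReal
  set f : ℕ → ℝ≥0∞ := fun j => ∫⁻ ω, ENNReal.ofReal (Real.exp (h * X j ω)) ∂P with hfdef
  -- product formula over any finset
  have hprod : ∀ s : Finset ℕ,
      ∫⁻ ω, ENNReal.ofReal (Real.exp (h * ∑ j ∈ s, X j ω)) ∂P = ∏ j ∈ s, f j := by
    intro s
    induction s using Finset.induction_on with
    | empty => simp
    | @insert a s ha ih =>
      have hsum_meas : Measurable (fun ω => ∑ j ∈ s, X j ω) :=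
        Finset.measurable_sum _ (fun j _ => hXm j)
      have hind : IndepFun (∑ j ∈ s, X j) (X a) P :=
        hXi.indepFun_finsetSum_of_notMem hXm ha
      have hind' : IndepFun (fun ω => ENNReal.ofReal (Real.exp (h * ∑ j ∈ s, X j ω)))
          (fun ω => ENNReal.ofReal (Real.exp (h * X a ω))) P := by
        have hc := hind.comp (φ := fun x : ℝ => ENNReal.ofReal (Real.exp (h * x)))
          (ψ := fun x : ℝ => ENNReal.ofReal (Real.exp (h * x)))
          ((Real.measurable_exp.comp (measurable_const_mul h)).ennreal_ofReal)
          ((Real.measurable_exp.comp (measurable_const_mul h)).ennreal_ofReal)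
        have he : ((fun x : ℝ => ENNReal.ofReal (Real.exp (h * x))) ∘ ∑ j ∈ s, X j)
            = fun ω => ENNReal.ofReal (Real.exp (h * ∑ j ∈ s, X j ω)) := by
          funext ω
          simp [Function.comp, Finset.sum_apply]
        rwa [he] at hc
      have hmul : ∫⁻ ω, ENNReal.ofReal (Real.exp (h * ∑ j ∈ s, X j ω)) *
            ENNReal.ofReal (Real.exp (h * X a ω)) ∂P =
          (∫⁻ ω, ENNReal.ofReal (Real.exp (h * ∑ j ∈ s, X j ω)) ∂P) *
            ∫⁻ ω, ENNReal.ofReal (Real.exp (h * X a ω)) ∂P :=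
        lintegral_mul_eq_lintegral_mul_lintegral_of_indepFun''
          ((Real.measurable_exp.comp (hsum_meas.const_mul h)).ennreal_ofReal).aemeasurable
          ((Real.measurable_exp.comp ((hXm a).const_mul h)).ennreal_ofReal).aemeasurable
          hind'
      calc ∫⁻ ω, ENNReal.ofReal (Real.exp (h * ∑ j ∈ insert a s, X j ω)) ∂P
          = ∫⁻ ω, ENNReal.ofReal (Real.exp (h * ∑ j ∈ s, X j ω)) *
              ENNReal.ofReal (Real.exp (h * X a ω)) ∂P := by
            apply lintegral_congr
            intro ω
            rw [Finset.sum_insert ha, ← ENNReal.ofReal_mul (Real.exp_nonneg _),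
              ← Real.exp_add]
            congr 2
            ring
        _ = (∫⁻ ω, ENNReal.ofReal (Real.exp (h * ∑ j ∈ s, X j ω)) ∂P) *
              ∫⁻ ω, ENNReal.ofReal (Real.exp (h * X a ω)) ∂P := hmul
        _ = ∏ j ∈ insert a s, f j := by
            rw [ih, Finset.prod_insert ha, mul_comm]
  set M : ℕ → ℝ≥0∞ := fun n => ∫⁻ ω, E n ω ∂P with hMdef
  have hMeq : ∀ n, M n = ∏ j ∈ Finset.range n, f j := fun n => hprod (Finset.range n)
  -- identify the suprema in the statement with M (k+1)
  have hSint : ∀ k : ℕ, ∫⁻ ω, ENNReal.ofReal (Real.exp (h * Sstar (k + 1) ω)) ∂P = M (k + 1) := by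
    intro k
    apply lintegral_congr
    intro ω
    rw [hTS]
  have hIccProd : ∀ k : ℕ, ∏ j ∈ Finset.Icc 1 (k + 1),
      ∫⁻ ω, ENNReal.ofReal (Real.exp (h * (v (j - 1) * Ystar j ω))) ∂P = M (k + 1) := by
    intro k
    rw [hMeq, ← Finset.Ico_add_one_right_eq_Icc, Finset.prod_Ico_eq_prod_range]
    apply Finset.prod_congr rfl
    intro i _
    have h1 : 1 + i = i + 1 := by omega
    rw [h1]
    simp [hfdef, hXdef]
  constructor
  swap
  · -- second conjunct
    apply iSup_congr
    intro k
    rw [hSint k, hIccProd k]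
  -- main inequality
  -- first–passage events
  set A : ℕ → Set Ω := fun k => {ω | u < T (k + 1) ω ∧ ∀ m < k, T (m + 1) ω ≤ u} with hAdef
  have hAm : ∀ k, MeasurableSet (A k) := by
    intro k
    have : A k = {ω | u < T (k + 1) ω} ∩ ⋂ m ∈ Set.Iio k, {ω | T (m + 1) ω ≤ u} := by
      ext ω; simp [hAdef, Set.mem_iInter]
    rw [this]
    exact (measurableSet_lt measurable_const (hTm _)).inter
      (MeasurableSet.biInter (Set.to_countable _)
        fun m _ => measurableSet_le (hTm _) measurable_const)
  have hdlt : ∀ {i j : ℕ}, i < j → Disjoint (A i) (A j) := by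
    intro i j hij
    rw [Set.disjoint_left]
    intro ω hi hj
    exact absurd hi.1 (not_lt.mpr (hj.2 i hij))
  have hdisj : Pairwise (Function.onFun Disjoint A) := by
    intro i j hij
    rcases lt_or_gt_of_ne hij with hl | hl
    · exact hdlt hl
    · exact (hdlt hl).symm
  -- ruin is a.s. contained in the union of the A k
  have hsub : P {ω | ∃ k : ℕ, R k ω < 0} ≤ P (⋃ k, A k) := by
    apply measure_mono_ae
    filter_upwards [hae] with ω hω hmem
    obtain ⟨m, hm⟩ := stmt10_aux_det u hu r (fun k => α k ω) (fun k => R k ω)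
      (fun k => Y k ω) hr v hv hω.1 (fun k hk => (hω.2 k hk).1)
      (fun k hk => (hω.2 k hk).2) hmem
    have hm' : u < T (m + 1) ω := by
      rw [hTdef]
      convert hm using 2 with j
      simp [hXdef, hYstar]
    have hex : ∃ m, u < T (m + 1) ω := ⟨m, hm'⟩
    exact Set.mem_iUnion.mpr ⟨Nat.find hex, Nat.find_spec hex,
      fun m' hm' => le_of_not_gt (Nat.find_min hex hm')⟩
  have hUnion : P (⋃ k, A k) = ∑' k, P (A k) := measure_iUnion hdisj hAm
  -- abbreviations for the exponential constants
  set c : ℝ≥0∞ := ENNReal.ofReal (Real.exp (h * u)) with hcdef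
  set cinv : ℝ≥0∞ := ENNReal.ofReal (Real.exp (-h * u)) with hcinvdef
  have hcc : cinv * c = 1 := by
    rw [hcdef, hcinvdef, ← ENNReal.ofReal_mul (Real.exp_nonneg _), ← Real.exp_add]
    norm_num
  set C : ℝ≥0∞ := ⨆ k : ℕ, M (k + 1) with hCdef
  have hgoalC : (⨆ k : ℕ, ∫⁻ ω, ENNReal.ofReal (Real.exp (h * Sstar (k + 1) ω)) ∂P) = C := by
    apply iSup_congr; exact hSint
  rw [hgoalC]
  by_cases hC : C = ⊤
  · rw [hC, ENNReal.mul_top]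
    · exact le_top
    · simp [hcinvdef, Real.exp_pos, ENNReal.ofReal_pos.mpr]
  -- step 1 : Chernoff on each A k
  have step1 : ∀ k : ℕ, c * P (A k) ≤ ∫⁻ ω in A k, E (k + 1) ω ∂P := by
    intro k
    calc c * P (A k) = ∫⁻ _ in A k, c ∂P := (setLIntegral_const _ _).symm
      _ ≤ ∫⁻ ω in A k, E (k + 1) ω ∂P := by
          apply setLIntegral_mono (hEm (k + 1))
          intro ω hω
          exact ENNReal.ofReal_le_ofReal (Real.exp_le_exp.mpr
            (mul_le_mul_of_nonneg_left hω.1.le hh))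
  -- step 2 : splitting by independence
  have hsplit : ∀ k n : ℕ, k < n →
      ∫⁻ ω in A k, E n ω ∂P =
        (∫⁻ ω in A k, E (k + 1) ω ∂P) * ∏ j ∈ Finset.Ico (k + 1) n, f j := by
    intro k n hkn
    set S1 : Finset ℕ := Finset.range (k + 1) with hS1
    set S2 : Finset ℕ := Finset.Ico (k + 1) n with hS2
    have hdisjS : Disjoint S1 S2 := by
      rw [Finset.disjoint_left]
      intro i hi1 hi2
      simp [hS1] at hi1
      simp [hS2] at hi2
      omega
    have hIF := hXi.indepFun_finset S1 S2 hdisjS hXm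
    set σ : ℕ → ((i : S1) → ℝ) → ℝ :=
      fun m x => ∑ j ∈ Finset.range (m + 1), if hj : j ∈ S1 then x ⟨j, hj⟩ else 0 with hσdef
    have hσm : ∀ m, Measurable (σ m) := by
      intro m
      apply Finset.measurable_sum
      intro j _
      by_cases hj : j ∈ S1
      · simp only [hj, dif_pos]
        exact measurable_pi_apply _
      · simp only [hj, dif_neg, not_false_iff]
        exact measurable_const
    set D : Set ((i : S1) → ℝ) := {x | u < σ k x ∧ ∀ m < k, σ m x ≤ u} with hDdef
    have hDm : MeasurableSet D := by
      have : D = {x | u < σ k x} ∩ ⋂ m ∈ Set.Iio k, {x | σ m x ≤ u} := by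
        ext x; simp [hDdef, Set.mem_iInter]
      rw [this]
      exact (measurableSet_lt measurable_const (hσm _)).inter
        (MeasurableSet.biInter (Set.to_countable _)
          fun m _ => measurableSet_le (hσm _) measurable_const)
    set F1 : ((i : S1) → ℝ) → ℝ≥0∞ :=
      D.indicator (fun x => ENNReal.ofReal (Real.exp (h * σ k x))) with hF1def
    have hF1m : Measurable F1 :=
      ((Real.measurable_exp.comp ((hσm k).const_mul h)).ennreal_ofReal).indicator hDm
    set F2 : ((i : S2) → ℝ) → ℝ≥0∞ :=
      fun x => ENNReal.ofReal (Real.exp (h * ∑ i ∈ S2.attach, x i)) with hF2def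
    have hF2m : Measurable F2 :=
      (Real.measurable_exp.comp ((Finset.measurable_sum _
        (fun i _ => measurable_pi_apply i)).const_mul h)).ennreal_ofReal
    have hcomp := (hIF.comp hF1m hF2m)
    have htm1 : Measurable (fun ω (i : S1) => X i ω) :=
      measurable_pi_lambda _ fun i => hXm i
    have htm2 : Measurable (fun ω (i : S2) => X i ω) :=
      measurable_pi_lambda _ fun i => hXm i
    -- identify the compositions
    have hσT : ∀ ω, ∀ m ≤ k, σ m (fun i : S1 => X i ω) = T (m + 1) ω := by
      intro ω m hm
      rw [hTdef, hσdef]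
      apply Finset.sum_congr rfl
      intro j hj
      have hjS : j ∈ S1 := by
        rw [hS1, Finset.mem_range]
        have := Finset.mem_range.mp hj
        omega
      simp [hjS]
    have hid1 : (F1 ∘ fun ω (i : S1) => X i ω) = (A k).indicator (E (k + 1)) := by
      funext ω
      have hmemiff : ((fun i : S1 => X i ω) ∈ D) ↔ ω ∈ A k := by
        constructor
        · rintro ⟨h1, h2⟩
          exact ⟨by rwa [hσT ω k le_rfl] at h1,
            fun m hm => by have := h2 m hm; rwa [hσT ω m hm.le] at this⟩
        · rintro ⟨h1, h2⟩
          exact ⟨by rwa [hσT ω k le_rfl], fun m hm => by rw [hσT ω m hm.le]; exact h2 m hm⟩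
      by_cases hω : ω ∈ A k
      · rw [Function.comp_apply, hF1def,
          Set.indicator_of_mem (hmemiff.mpr hω), Set.indicator_of_mem hω,
          hσT ω k le_rfl]
      · rw [Function.comp_apply, hF1def,
          Set.indicator_of_notMem (fun hx => hω (hmemiff.mp hx)),
          Set.indicator_of_notMem hω]
    have hid2 : (F2 ∘ fun ω (i : S2) => X i ω) =
        fun ω => ENNReal.ofReal (Real.exp (h * ∑ j ∈ S2, X j ω)) := by
      funext ω
      exact congrArg (fun z => ENNReal.ofReal (Real.exp (h * z)))
        (Finset.sum_attach S2 (fun j => X j ω))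
    set g1 : Ω → ℝ≥0∞ := fun ω => F1 (fun i : S1 => X i ω) with hg1
    set g2 : Ω → ℝ≥0∞ := fun ω => F2 (fun i : S2 => X i ω) with hg2
    have hg1m : Measurable g1 := hF1m.comp htm1
    have hg2m : Measurable g2 := hF2m.comp htm2
    have hcomp' : IndepFun g1 g2 P := hcomp
    have hmul : ∫⁻ ω, g1 ω * g2 ω ∂P = (∫⁻ ω, g1 ω ∂P) * ∫⁻ ω, g2 ω ∂P :=
      lintegral_mul_eq_lintegral_mul_lintegral_of_indepFun''
        hg1m.aemeasurable hg2m.aemeasurable hcomp'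
    have hg1eq : ∀ ω, g1 ω = (A k).indicator (E (k + 1)) ω := fun ω => congrFun hid1 ω
    have hg2eq : ∀ ω, g2 ω = ENNReal.ofReal (Real.exp (h * ∑ j ∈ S2, X j ω)) :=
      fun ω => congrFun hid2 ω
    have hEsplit : ∀ ω, (A k).indicator (E n) ω =
        (A k).indicator (E (k + 1)) ω * ENNReal.ofReal (Real.exp (h * ∑ j ∈ S2, X j ω)) := by
      intro ω
      by_cases hω : ω ∈ A k
      · rw [Set.indicator_of_mem hω, Set.indicator_of_mem hω, hEdef]
        simp only
        rw [← ENNReal.ofReal_mul (Real.exp_nonneg _), ← Real.exp_add]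
        congr 2
        have hTn : T n ω = T (k + 1) ω + ∑ j ∈ S2, X j ω := by
          rw [hTdef, hS2]
          exact (Finset.sum_range_add_sum_Ico _ (by omega)).symm
        rw [hTn]
        ring
      · simp [Set.indicator_of_notMem hω]
    calc ∫⁻ ω in A k, E n ω ∂P = ∫⁻ ω, (A k).indicator (E n) ω ∂P := by
          rw [← lintegral_indicator (hAm k)]
      _ = ∫⁻ ω, g1 ω * g2 ω ∂P := by
          apply lintegral_congr
          intro ω
          rw [hg1eq ω, hg2eq ω, hEsplit ω]
      _ = (∫⁻ ω, g1 ω ∂P) * ∫⁻ ω, g2 ω ∂P := hmul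
      _ = (∫⁻ ω in A k, E (k + 1) ω ∂P) * ∏ j ∈ Finset.Ico (k + 1) n, f j := by
          rw [lintegral_congr hg1eq, lintegral_congr hg2eq,
            lintegral_indicator (hAm k), hprod S2]
  -- positivity and finiteness of M
  have hMpos : ∀ n, 0 < M n := by
    intro n
    rw [hMdef]
    rw [lintegral_pos_iff_support (hEm n)]
    have : Function.support (E n) = Set.univ := by
      ext ω
      simp only [Function.mem_support, hEdef, Set.mem_univ, iff_true, ne_eq,
        ENNReal.ofReal_eq_zero, not_le]
      exact Real.exp_pos _
    rw [this]
    simp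
  have hMne : ∀ n, M n ≠ ⊤ := by
    intro n
    cases n with
    | zero =>
      have : M 0 = 1 := by
        rw [hMdef]
        simp [hEdef, hTdef]
      rw [this]; exact ENNReal.one_ne_top
    | succ n =>
      exact ne_top_of_le_ne_top hC (le_iSup (fun k => M (k + 1)) n)
  -- the finite-horizon bound
  have hfin : ∀ n : ℕ, ∑ k ∈ Finset.range n, c * P (A k) ≤ C := by
    intro n
    have hper : ∀ k ∈ Finset.range n,
        (c * P (A k)) * M n ≤ C * ∫⁻ ω in A k, E n ω ∂P := by
      intro k hk
      have hkn := Finset.mem_range.mp hk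
      have hMsplit : M n = M (k + 1) * ∏ j ∈ Finset.Ico (k + 1) n, f j := by
        rw [hMeq n, hMeq (k + 1), Finset.prod_range_mul_prod_Ico f (by omega)]
      calc (c * P (A k)) * M n
          = M (k + 1) * ((c * P (A k)) * ∏ j ∈ Finset.Ico (k + 1) n, f j) := by
            rw [hMsplit]; ring
        _ ≤ C * ((∫⁻ ω in A k, E (k + 1) ω ∂P) * ∏ j ∈ Finset.Ico (k + 1) n, f j) :=
            mul_le_mul' (le_iSup (fun k => M (k + 1)) k) (mul_le_mul_left (step1 k) _)
        _ = C * ∫⁻ ω in A k, E n ω ∂P := by rw [← hsplit k n hkn]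
    have hsum : ∑ k ∈ Finset.range n, ∫⁻ ω in A k, E n ω ∂P ≤ M n := by
      have heq : ∀ k ∈ Finset.range n, ∫⁻ ω in A k, E n ω ∂P
          = ∫⁻ ω, (A k).indicator (E n) ω ∂P := by
        intro k _
        rw [← lintegral_indicator (hAm k)]
      calc ∑ k ∈ Finset.range n, ∫⁻ ω in A k, E n ω ∂P
          = ∑ k ∈ Finset.range n, ∫⁻ ω, (A k).indicator (E n) ω ∂P :=
            Finset.sum_congr rfl heq
        _ = ∫⁻ ω, ∑ k ∈ Finset.range n, (A k).indicator (E n) ω ∂P :=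
            (lintegral_finset_sum _ (fun k _ => (hEm n).indicator (hAm k))).symm
        _ ≤ M n := ?_
      apply lintegral_mono
      intro ω
      show ∑ k ∈ Finset.range n, (A k).indicator (E n) ω ≤ E n ω
      by_cases hex : ∃ k ∈ Finset.range n, ω ∈ A k
      · obtain ⟨k0, hk0n, hk0⟩ := hex
        rw [Finset.sum_eq_single_of_mem k0 hk0n]
        · rw [Set.indicator_of_mem hk0]
        · intro b _ hbne
          exact Set.indicator_of_notMem
            (Set.disjoint_left.mp (hdisj hbne) · hk0) _
      · push_neg at hex
        rw [Finset.sum_eq_zero fun k hk => Set.indicator_of_notMem (hex k hk) _]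
        exact zero_le
    have hchain : (∑ k ∈ Finset.range n, c * P (A k)) * M n ≤ C * M n := by
      rw [Finset.sum_mul]
      calc ∑ k ∈ Finset.range n, (c * P (A k)) * M n
          ≤ ∑ k ∈ Finset.range n, C * ∫⁻ ω in A k, E n ω ∂P :=
            Finset.sum_le_sum hper
        _ = C * ∑ k ∈ Finset.range n, ∫⁻ ω in A k, E n ω ∂P := by
            rw [Finset.mul_sum]
        _ ≤ C * M n := mul_le_mul_right hsum C
    exact (ENNReal.mul_le_mul_iff_left (hMpos n).ne' (hMne n)).mp hchain
  -- sum up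
  have htsum : ∑' k : ℕ, c * P (A k) ≤ C := by
    rw [ENNReal.tsum_eq_iSup_sum]
    apply iSup_le
    intro s
    calc ∑ k ∈ s, c * P (A k) ≤ ∑ k ∈ Finset.range (s.sup id + 1), c * P (A k) := by
          apply Finset.sum_le_sum_of_subset
          intro k hk
          rw [Finset.mem_range]
          exact Nat.lt_succ_of_le (Finset.le_sup (f := id) hk)
      _ ≤ C := hfin _
  calc P {ω | ∃ k : ℕ, R k ω < 0} ≤ P (⋃ k, A k) := hsub
    _ = ∑' k, P (A k) := hUnion
    _ = ∑' k, cinv * (c * P (A k)) := by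
        apply tsum_congr
        intro k
        rw [← mul_assoc, hcc, one_mul]
    _ = cinv * ∑' k, c * P (A k) := ENNReal.tsum_mul_left
    _ ≤ cinv * C := mul_le_mul_right htsum cinv
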